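/- arXiv:1809.02892 — 2 statements merged into one kernel-verified Lean document; each statement's English description precedes it below -/
import Mathlib

section
/- Let M ≥ 1 and N ≥ 1 be integers, let δ ≥ 0 and Q ≥ 0 be reals, and let j be an integer with 1 ≤ j ≤ N. Consider the n = N jobs with r_i = δ for all i; p_i = δ for i ≠ j and p_j = Q − Q/M; q_i = Q/M for i ≠ j and q_j = Q/M + N·δ. Then the delivery-makespan (critical path length of the corresponding dependency graph in which task τ_1's critical section is the j-th in the chain) equals j·δ + Q + N·δ. -/
/-- Completion times of jobs `1, …, n` processed non-preemptively in index order. -/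
noncomputable def complTime (r p : ℕ → ℝ) : ℕ → ℝ
  | 0 => 0
  | 1 => r 1 + p 1
  | (i + 2) => max (complTime r p (i + 1)) (r (i + 2)) + p (i + 2)

/-- Critical-path computation for the lower-bound instance of Theorem 4: with
`N` jobs, all released at `δ`, where the special job `j` (task `τ₁`) has processing
time `Q - Q/M` and delivery time `Q/M + N·δ` and every other job has processing time
`δ` and delivery time `Q/M`, the delivery-makespan (critical path length of the
dependency graph in which `τ₁`'s critical section is the `j`-th in the chain)
equals `j·δ + Q + N·δ`. -/
theorem lower_bound_instance_critical_path
    (M N : ℕ) (hM : 1 ≤ M) (hN : 1 ≤ N) (δ Q : ℝ) (hδ : 0 ≤ δ) (hQ : 0 ≤ Q)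
    (j : ℕ) (hj1 : 1 ≤ j) (hjN : j ≤ N)
    (r p q : ℕ → ℝ)
    (hr : ∀ i, r i = δ)
    (hp : ∀ i, i ≠ j → p i = δ) (hpj : p j = Q - Q / M)
    (hq : ∀ i, i ≠ j → q i = Q / M) (hqj : q j = Q / M + N * δ) :
    (Finset.Icc 1 N).sup' (Finset.nonempty_Icc.mpr hN)
        (fun i => complTime r p i + q i)
      = j * δ + Q + N * δ := by
  have hM1 : (1:ℝ) ≤ (M:ℝ) := by exact_mod_cast hM
  have hMpos : (0:ℝ) < (M:ℝ) := by linarith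
  have hQM : Q / M ≤ Q := by
    rw [div_le_iff₀ hMpos]; nlinarith
  have hQM0 : 0 ≤ Q / M := div_nonneg hQ hMpos.le
  -- formula for completion times
  have hF : ∀ i, 1 ≤ i →
      complTime r p i = if i < j then (i+1) * δ else i * δ + (Q - Q / M) := by
    intro i hi
    induction i, hi using Nat.le_induction with
    | base =>
      simp only [complTime, hr]
      by_cases h1 : 1 < j
      · rw [hp 1 (by omega), if_pos h1]; push_cast; ring
      · have hj : j = 1 := by omega
        subst hj
        rw [hpj, if_neg (by omega)]; push_cast; ring
    | succ i hi ih =>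
      obtain ⟨k, rfl⟩ : ∃ k, i = k + 1 := ⟨i - 1, by omega⟩
      have hFk := ih
      have hge : δ ≤ complTime r p (k+1) := by
        rw [hFk]; split <;> push_cast <;> nlinarith
      show max (complTime r p (k+1)) (r (k+2)) + p (k+2) = _
      rw [hr, max_eq_left hge, hFk]
      rcases lt_trichotomy (k+2) j with h | h | h
      · rw [if_pos (by omega), if_pos h, hp _ (by omega)]; push_cast; ring
      · have hp2 : p (k+2) = Q - Q / M := by rw [h]; exact hpj
        rw [if_pos (by omega), if_neg (by omega), hp2]; push_cast; ring
      · rw [if_neg (by omega), if_neg (by omega), hp _ (by omega)]; push_cast; ring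
  apply le_antisymm
  · apply Finset.sup'_le
    intro i hi
    simp only [Finset.mem_Icc] at hi
    rw [hF i hi.1]
    have hiN : (i:ℝ) ≤ (N:ℝ) := by exact_mod_cast hi.2
    have hjr : (1:ℝ) ≤ (j:ℝ) := by exact_mod_cast hj1
    rcases eq_or_ne i j with rfl | hne
    · rw [hqj, if_neg (by omega)]; ring_nf; nlinarith
    · rw [hq i hne]
      split
      · have : (i:ℝ) + 1 ≤ (j:ℝ) := by exact_mod_cast (by omega : i + 1 ≤ j)
        nlinarith
      · nlinarith
  · have hjmem : j ∈ Finset.Icc 1 N := Finset.mem_Icc.mpr ⟨hj1, hjN⟩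
    refine le_trans (le_of_eq ?_) (Finset.le_sup' _ hjmem)
    rw [hF j hj1, if_neg (by omega), hqj]; ring
end

section
/- Let M ≥ 1 and N ≥ 1 be integers and δ ≥ 0, Q ≥ 0 reals. Consider the N jobs where job 1 has r_1 = δ, p_1 = Q − Q/M, q_1 = Q/M + N·δ and each job i ∈ {2,…,N} has r_i = δ, p_i = δ, q_i = Q/M. Then the minimum, over all permutations σ of {1,…,N}, of the delivery-makespan L_σ obtained by processing the jobs in the order σ equals (N+1)·δ + Q, and it is attained by any ordering that places job 1 first. -/
lemma complTime_const (δ : ℝ) (p : ℕ → ℝ) :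
    ∀ n : ℕ, 1 ≤ n → (∀ k, 1 ≤ k → k ≤ n → 0 ≤ p k) →
    complTime (fun _ => δ) p n = δ + ∑ k ∈ Finset.Icc 1 n, p k := by
  intro n
  induction n with
  | zero => intro h; exact absurd h (by norm_num)
  | succ m ih =>
    intro _ hpn
    rcases m with _ | k
    · simp [complTime]
    · have h1 : complTime (fun _ => δ) p (k + 1) = δ + ∑ j ∈ Finset.Icc 1 (k + 1), p j :=
        ih (by omega) (fun j hj1 hj2 => hpn j hj1 (by omega))
      have hs : 0 ≤ ∑ j ∈ Finset.Icc 1 (k + 1), p j :=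
        Finset.sum_nonneg fun j hj => by
          rw [Finset.mem_Icc] at hj; exact hpn j hj.1 (by omega)
      rw [complTime, h1, Finset.sum_Icc_succ_top (by omega : 1 ≤ k + 2)]
      rw [max_eq_left (by linarith)]
      ring


/-- Optimal dependency graph for the lower-bound instance of Theorem 4: for the `N`
jobs where job `1` has `r = δ`, `p = Q - Q/M`, `q = Q/M + N·δ` and every other job has
`r = δ`, `p = δ`, `q = Q/M`, the minimum over all permutations `σ` of `{1, …, N}` of the
delivery-makespan `L_σ` (obtained by processing the jobs in the order `σ 1, …, σ N`)
equals `(N+1)·δ + Q`, and it is attained by any ordering that places job `1` first. -/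
theorem lower_bound_instance_optimal_order
    (M N : ℕ) (hM : 1 ≤ M) (hN : 1 ≤ N) (δ Q : ℝ) (hδ : 0 ≤ δ) (hQ : 0 ≤ Q)
    (r p q : ℕ → ℝ)
    (hr : ∀ i, r i = δ)
    (hp : ∀ i, i ≠ 1 → p i = δ) (hp1 : p 1 = Q - Q / M)
    (hq : ∀ i, i ≠ 1 → q i = Q / M) (hq1 : q 1 = Q / M + N * δ) :
    (∀ σ : Equiv.Perm ℕ, (∀ i ∈ Finset.Icc 1 N, σ i ∈ Finset.Icc 1 N) →
        (N + 1) * δ + Q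
          ≤ (Finset.Icc 1 N).sup' (Finset.nonempty_Icc.mpr hN)
              (fun i => complTime (fun k => r (σ k)) (fun k => p (σ k)) i + q (σ i))) ∧
    (∀ σ : Equiv.Perm ℕ, (∀ i ∈ Finset.Icc 1 N, σ i ∈ Finset.Icc 1 N) → σ 1 = 1 →
        (Finset.Icc 1 N).sup' (Finset.nonempty_Icc.mpr hN)
            (fun i => complTime (fun k => r (σ k)) (fun k => p (σ k)) i + q (σ i))
          = (N + 1) * δ + Q) := by
  have hM' : (1 : ℝ) ≤ (M : ℝ) := by exact_mod_cast hM
  have hQM : Q / M ≤ Q := div_le_self hQ hM'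
  have hp1' : 0 ≤ p 1 := by rw [hp1]; linarith
  constructor
  · intro σ hσ
    -- find j with σ j = 1
    obtain ⟨j, hjmem, hj⟩ : ∃ j ∈ Finset.Icc 1 N, σ j = 1 := by
      obtain ⟨a, ha, hae⟩ := Finset.surj_on_of_inj_on_of_card_le
        (s := Finset.Icc 1 N) (t := Finset.Icc 1 N)
        (fun a _ => σ a) (fun a ha => hσ a ha)
        (fun a₁ a₂ _ _ h => σ.injective h) le_rfl 1
        (Finset.mem_Icc.mpr ⟨le_rfl, hN⟩)
      exact ⟨a, ha, hae.symm⟩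
    obtain ⟨hj1, hjN⟩ := Finset.mem_Icc.mp hjmem
    have hmem : ∀ k, 1 ≤ k → k ≤ N → 0 ≤ p (σ k) := by
      intro k h1 h2
      by_cases h : σ k = 1
      · rw [h]; exact hp1'
      · rw [hp _ h]; exact hδ
    have hrfun : ∀ i, (fun k => r (σ k)) i = (fun _ : ℕ => δ) i := fun i => hr _
    simp only [hr]
    have hC := complTime_const δ (fun k => p (σ k)) j hj1
      (fun k h1 h2 => hmem k h1 (h2.trans hjN))
    refine le_trans ?_ (Finset.le_sup' _ hjmem)
    rw [hC, hj, hq1]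
    have hsum : Q - Q / M ≤ ∑ k ∈ Finset.Icc 1 j, p (σ k) := by
      have hle := Finset.single_le_sum (f := fun k => p (σ k))
        (fun k hk => by
          rw [Finset.mem_Icc] at hk
          exact hmem k hk.1 (hk.2.trans hjN))
        (Finset.mem_Icc.mpr ⟨hj1, le_rfl⟩ : j ∈ Finset.Icc 1 j)
      simp only [hj, hp1] at hle
      exact hle
    linarith
  · intro σ hσ hσ1
    have hmem : ∀ k, 1 ≤ k → k ≤ N → 0 ≤ p (σ k) := by
      intro k h1 h2
      by_cases h : σ k = 1
      · rw [h]; exact hp1'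
      · rw [hp _ h]; exact hδ
    simp only [hr]
    have hsum : ∀ i, 1 ≤ i → i ≤ N →
        ∑ k ∈ Finset.Icc 1 i, p (σ k) = (Q - Q / M) + ((i : ℝ) - 1) * δ := by
      intro i hi1 hiN
      have h1mem : 1 ∈ Finset.Icc 1 i := Finset.mem_Icc.mpr ⟨le_rfl, hi1⟩
      rw [← Finset.add_sum_erase _ _ h1mem, hσ1, hp1]
      have : ∑ k ∈ (Finset.Icc 1 i).erase 1, p (σ k)
          = ∑ k ∈ (Finset.Icc 1 i).erase 1, δ := by
        refine Finset.sum_congr rfl fun k hk => ?_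
        rw [Finset.mem_erase] at hk
        apply hp
        intro h
        exact hk.1 (σ.injective (h.trans hσ1.symm))
      rw [this, Finset.sum_const, Finset.Icc_erase_left, Nat.card_Ioc, nsmul_eq_mul]
      have : ((i - 1 : ℕ) : ℝ) = (i : ℝ) - 1 := by
        push_cast [Nat.cast_sub hi1]; ring
      rw [this]
    apply le_antisymm
    · apply Finset.sup'_le
      intro i hi
      obtain ⟨hi1, hiN⟩ := Finset.mem_Icc.mp hi
      rw [complTime_const δ (fun k => p (σ k)) i hi1
        (fun k h1 h2 => hmem k h1 (h2.trans hiN)), hsum i hi1 hiN]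
      by_cases h : i = 1
      · subst h
        rw [hσ1, hq1]
        push_cast
        ring_nf
        linarith
      · rw [hq (σ i) (fun hc => h (σ.injective (hc.trans hσ1.symm)))]
        have hiR : (i : ℝ) ≤ (N : ℝ) := by exact_mod_cast hiN
        have : (i : ℝ) * δ ≤ (N : ℝ) * δ := mul_le_mul_of_nonneg_right hiR hδ
        linarith
    · refine le_trans ?_ (Finset.le_sup' _ (Finset.mem_Icc.mpr ⟨le_rfl, hN⟩ : 1 ∈ Finset.Icc 1 N))
      rw [complTime_const δ (fun k => p (σ k)) 1 le_rfl
        (fun k h1 h2 => hmem k h1 (h2.trans hN)), hsum 1 le_rfl hN, hσ1, hq1]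
      push_cast
      ring_nf
      linarith
end
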